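/- arXiv:2207.11124 — 6 statements merged into one kernel-verified Lean document; each statement's English description precedes it below -/
import Mathlib

section
/- Fix Ω > 0, T > 0, ν > 0, and r_ν as above. For every ε₂ > 0 there exist an integer d ≥ 1 and real coefficients a₁,…,a_d such that for all ω ∈ ℝ with |ω| ≥ Ω, |e^{iωT} r_ν(ω) − Σ_{k=1}^d a_k (iω)^{−k}| ≤ ε₂. -/
open MeasureTheory Filter Set Complex

theorem stmt2
    (r : ℝ → ℝ) (hr_cont : Continuous r)
    (hr_pos : ∀ ω, 0 < r ω) (hr_le : ∀ ω, r ω ≤ 1)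
    (hr0 : r 0 = 1) (hr_even : ∀ ω, r (-ω) = r ω)
    (hr_anti : AntitoneOn r (Set.Ici 0))
    (hr_lim : Tendsto r (cocompact ℝ) (nhds 0))
    (Ω T ν : ℝ) (hΩ : 0 < Ω) (hT : 0 < T) (hν : 0 < ν)
    (ε₂ : ℝ) (hε : 0 < ε₂) :
    ∃ d : ℕ, 1 ≤ d ∧ ∃ a : ℕ → ℝ,
      ∀ ω : ℝ, Ω ≤ |ω| →
        ‖Complex.exp (Complex.I * ω * T) * (r (ν * ω) : ℂ) -
          ∑ k ∈ Finset.Icc 1 d, (a k : ℂ) * (Complex.I * ω) ^ (-(k : ℤ))‖ ≤ ε₂ := by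
  have hε3 : 0 < ε₂ / 3 := by positivity
  -- r is small far away
  have hsmall : ∀ ε : ℝ, 0 < ε → ∃ R : ℝ, 0 < R ∧ ∀ x : ℝ, R ≤ |x| → r x < ε := by
    intro ε hε'
    have h := hr_lim (Metric.ball_mem_nhds (0:ℝ) hε')
    rw [Filter.mem_map, Filter.mem_cocompact] at h
    obtain ⟨K, hK, hKs⟩ := h
    obtain ⟨R, hR⟩ := hK.isBounded.subset_closedBall 0
    refine ⟨max R 0 + 1, by positivity, fun x hx => ?_⟩
    have hxK : x ∉ K := by
      intro hxK
      have h1 : |x| ≤ R := by simpa [Real.norm_eq_abs] using hR hxK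
      have h2 : R ≤ max R 0 := le_max_left _ _
      linarith
    have h3 := hKs hxK
    simp only [Set.mem_preimage, Metric.mem_ball, Real.dist_eq, sub_zero] at h3
    exact lt_of_le_of_lt (le_abs_self _) h3
  set F : ℝ → ℂ := fun t =>
    if t = 0 then 0 else Complex.exp (Complex.I * (t⁻¹ : ℝ) * T) * (r (ν * t⁻¹) : ℂ) with hFdef
  have hFnorm : ∀ t : ℝ, t ≠ 0 → ‖F t‖ = r (ν * t⁻¹) := by
    intro t ht
    simp only [hFdef, if_neg ht, norm_mul]
    rw [Complex.norm_exp]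
    have h0 : (Complex.I * (t⁻¹ : ℝ) * T).re = 0 := by simp
    rw [h0, Real.exp_zero, one_mul, Complex.norm_real, Real.norm_eq_abs,
      abs_of_pos (hr_pos _)]
  have hFcont : Continuous F := by
    rw [continuous_iff_continuousAt]
    intro t
    rcases eq_or_ne t 0 with rfl | ht
    · have hF0 : F 0 = 0 := if_pos rfl
      rw [ContinuousAt, hF0, Metric.tendsto_nhds]
      intro ε hε'
      obtain ⟨R, hR0, hRr⟩ := hsmall ε hε'
      rw [Metric.eventually_nhds_iff]
      refine ⟨ν / R, by positivity, fun s hs => ?_⟩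
      rcases eq_or_ne s 0 with rfl | hs0
      · simpa [hF0] using hε'
      · rw [dist_zero_right, hFnorm s hs0]
        apply hRr
        rw [abs_mul, abs_inv, abs_of_pos hν, ← div_eq_mul_inv]
        have h1 : 0 < |s| := abs_pos.mpr hs0
        rw [le_div_iff₀ h1]
        rw [Real.dist_eq, sub_zero] at hs
        have h2 := (lt_div_iff₀ hR0).mp hs
        nlinarith
    · have h1 : ContinuousAt (fun s : ℝ => s⁻¹) t := continuousAt_inv₀ ht
      have hc : ContinuousAt (fun s : ℝ =>
          Complex.exp (Complex.I * ((s⁻¹ : ℝ) : ℂ) * (T : ℂ)) * ((r (ν * s⁻¹) : ℝ) : ℂ)) t := by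
        apply ContinuousAt.mul
        · exact Complex.continuous_exp.continuousAt.comp
            ((continuousAt_const.mul (Complex.continuous_ofReal.continuousAt.comp h1)).mul
              continuousAt_const)
        · exact Complex.continuous_ofReal.continuousAt.comp
            ((hr_cont.continuousAt).comp (continuousAt_const.mul h1))
      apply hc.congr
      filter_upwards [eventually_ne_nhds ht] with s hs
      simp only [hFdef, if_neg hs]
  -- Weierstrass approximation of Re F and Im F
  obtain ⟨p, hp⟩ := exists_polynomial_near_of_continuousOn (-Ω⁻¹) Ω⁻¹ (fun t => (F t).re)
    ((Complex.continuous_re.comp hFcont).continuousOn) (ε₂/3) hε3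
  obtain ⟨q, hq⟩ := exists_polynomial_near_of_continuousOn (-Ω⁻¹) Ω⁻¹ (fun t => (F t).im)
    ((Complex.continuous_im.comp hFcont).continuousOn) (ε₂/3) hε3
  set d : ℕ := max (max p.natDegree q.natDegree) 1 with hddef
  set c : ℕ → ℂ := fun k => ((p.coeff k : ℂ) + Complex.I * (q.coeff k : ℂ)) * Complex.I ^ k
    with hcdef
  have hpd : p.natDegree < d + 1 :=
    Nat.lt_succ_of_le (le_trans (le_max_left _ _) (le_max_left _ _))
  have hqd : q.natDegree < d + 1 :=
    Nat.lt_succ_of_le (le_trans (le_max_right _ _) (le_max_left _ _))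
  have hne : ∀ ω : ℝ, Ω ≤ |ω| → ω ≠ 0 := by
    intro ω hω h
    rw [h, abs_zero] at hω
    linarith
  have hMem : ∀ ω : ℝ, Ω ≤ |ω| → ω⁻¹ ∈ Set.Icc (-Ω⁻¹) Ω⁻¹ := by
    intro ω hω
    have h2 : |ω⁻¹| ≤ Ω⁻¹ := by
      rw [abs_inv]
      exact inv_anti₀ hΩ hω
    exact abs_le.mp h2
  -- key polynomial identity
  have hA : ∀ ω : ℝ, ω ≠ 0 → ∑ k ∈ Finset.range (d+1), c k * (Complex.I * ω) ^ (-(k:ℤ))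
      = ((p.eval ω⁻¹ : ℝ) : ℂ) + Complex.I * ((q.eval ω⁻¹ : ℝ) : ℂ) := by
    intro ω hω0
    have hterm : ∀ k ∈ Finset.range (d+1), c k * (Complex.I * ω) ^ (-(k:ℤ))
        = ((p.coeff k : ℂ) + Complex.I * (q.coeff k : ℂ)) * ((ω⁻¹ : ℝ) : ℂ) ^ k := by
      intro k _
      have hz : ((Complex.I * ω) ^ (-(k:ℤ)) : ℂ) = (-Complex.I) ^ k * ((ω⁻¹:ℝ):ℂ) ^ k := by
        rw [zpow_neg, zpow_natCast, ← inv_pow, ← mul_pow]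
        congr 1
        rw [mul_inv, Complex.inv_I, Complex.ofReal_inv]
      have h1 : Complex.I ^ k * (-Complex.I) ^ k = 1 := by
        rw [← mul_pow, mul_neg, Complex.I_mul_I, neg_neg, one_pow]
      calc ((p.coeff k : ℂ) + Complex.I * (q.coeff k : ℂ)) * Complex.I ^ k
            * ((Complex.I * ω) ^ (-(k:ℤ)))
          = ((p.coeff k : ℂ) + Complex.I * (q.coeff k : ℂ))
              * (Complex.I ^ k * (-Complex.I) ^ k) * ((ω⁻¹:ℝ):ℂ) ^ k := by rw [hz]; ring
        _ = _ := by rw [h1]; ring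
    rw [Finset.sum_congr rfl hterm]
    have hp' : ((p.eval ω⁻¹ : ℝ) : ℂ) = ∑ k ∈ Finset.range (d+1),
        (p.coeff k : ℂ) * ((ω⁻¹:ℝ):ℂ) ^ k := by
      rw [Polynomial.eval_eq_sum_range' hpd]
      push_cast
      rfl
    have hq' : ((q.eval ω⁻¹ : ℝ) : ℂ) = ∑ k ∈ Finset.range (d+1),
        (q.coeff k : ℂ) * ((ω⁻¹:ℝ):ℂ) ^ k := by
      rw [Polynomial.eval_eq_sum_range' hqd]
      push_cast
      rfl
    rw [hp', hq', Finset.mul_sum, ← Finset.sum_add_distrib]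
    exact Finset.sum_congr rfl fun k _ => by ring
  -- uniform bound for the complex-coefficient approximation
  have H : ∀ ω : ℝ, Ω ≤ |ω| →
      ‖Complex.exp (Complex.I * ω * T) * (r (ν * ω) : ℂ)
        - ∑ k ∈ Finset.range (d+1), c k * (Complex.I * ω) ^ (-(k:ℤ))‖ < 2 * (ε₂/3) := by
    intro ω hω
    have hω0 := hne ω hω
    rw [hA ω hω0]
    have hFval : Complex.exp (Complex.I * ω * T) * (r (ν * ω) : ℂ) = F ω⁻¹ := by
      simp only [hFdef, if_neg (inv_ne_zero hω0), inv_inv]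
    rw [hFval]
    set w := F ω⁻¹ - (((p.eval ω⁻¹ : ℝ) : ℂ) + Complex.I * ((q.eval ω⁻¹ : ℝ):ℂ)) with hw
    have hre : w.re = (F ω⁻¹).re - p.eval ω⁻¹ := by simp [hw]
    have him : w.im = (F ω⁻¹).im - q.eval ω⁻¹ := by simp [hw]
    have h1 := hp ω⁻¹ (hMem ω hω)
    have h2 := hq ω⁻¹ (hMem ω hω)
    calc ‖w‖ ≤ |w.re| + |w.im| := by
          exact Complex.norm_le_abs_re_add_abs_im w
      _ < 2 * (ε₂ / 3) := by
          rw [hre, him, abs_sub_comm, abs_sub_comm ((F ω⁻¹).im)]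
          linarith
  -- the constant coefficient is small
  have hc0 : |(c 0).re| < ε₂ / 3 := by
    have h0 : (c 0).re = p.coeff 0 := by simp [hcdef]
    have hmem : (0:ℝ) ∈ Set.Icc (-Ω⁻¹) Ω⁻¹ :=
      ⟨by simp [le_of_lt (inv_pos.mpr hΩ)], le_of_lt (inv_pos.mpr hΩ)⟩
    have h1 := hp 0 hmem
    have hF0 : (F 0).re = 0 := by simp [hFdef]
    rw [h0, Polynomial.coeff_zero_eq_eval_zero]
    calc |p.eval 0| = |p.eval 0 - (F 0).re| := by rw [hF0, sub_zero]
      _ < ε₂/3 := h1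
  refine ⟨d, le_max_right _ _, fun k => (c k).re, fun ω hω => ?_⟩
  have hω0 := hne ω hω
  have hω' : Ω ≤ |(-ω)| := by rwa [abs_neg]
  have hsplit : Finset.range (d+1) = insert 0 (Finset.Icc 1 d) := by
    ext x
    simp only [Finset.mem_range, Finset.mem_insert, Finset.mem_Icc]
    omega
  have hIcc : ∑ k ∈ Finset.Icc 1 d, (((c k).re : ℝ):ℂ) * (Complex.I * ω) ^ (-(k:ℤ))
      = ∑ k ∈ Finset.range (d+1), (((c k).re : ℝ):ℂ) * (Complex.I * ω) ^ (-(k:ℤ))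
        - (((c 0).re : ℝ):ℂ) := by
    rw [hsplit, Finset.sum_insert (by simp)]
    simp
  -- symmetrization: real parts of coefficients still approximate
  have hcc : ∀ (zf : ℂ), ∀ k : ℕ, (((c k).re : ℝ):ℂ) * zf * 2
      = c k * zf + (starRingEnd ℂ) (c k) * zf := by
    intro zf k
    rw [← add_mul, Complex.add_conj]
    push_cast
    ring
  have hconjf : (starRingEnd ℂ) (Complex.exp (Complex.I * ((-ω : ℝ):ℂ) * T) * (r (ν * (-ω)) : ℂ))
      = Complex.exp (Complex.I * ω * T) * (r (ν * ω) : ℂ) := by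
    rw [map_mul, ← Complex.exp_conj]
    congr 1
    · congr 1
      rw [map_mul, map_mul, Complex.conj_I, Complex.conj_ofReal, Complex.conj_ofReal]
      push_cast
      ring
    · rw [Complex.conj_ofReal]
      norm_cast
      rw [show ν * -ω = -(ν * ω) by ring, hr_even]
  have hconjz : ∀ k ∈ Finset.range (d+1),
      (starRingEnd ℂ) (c k * (Complex.I * ((-ω : ℝ):ℂ)) ^ (-(k:ℤ)))
      = (starRingEnd ℂ) (c k) * (Complex.I * ω) ^ (-(k:ℤ)) := by
    intro k _
    simp only [map_mul, map_zpow₀, Complex.conj_I, Complex.conj_ofReal]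
    congr 2
    push_cast
    ring
  have h2 : ∑ k ∈ Finset.range (d+1), (((c k).re : ℝ):ℂ) * (Complex.I * ω) ^ (-(k:ℤ)) * 2
      = ∑ k ∈ Finset.range (d+1), c k * (Complex.I * ω) ^ (-(k:ℤ))
        + ∑ k ∈ Finset.range (d+1), (starRingEnd ℂ) (c k) * (Complex.I * ω) ^ (-(k:ℤ)) := by
    rw [← Finset.sum_add_distrib]
    exact Finset.sum_congr rfl fun k _ => hcc _ k
  have key : Complex.exp (Complex.I * ω * T) * (r (ν * ω) : ℂ)
      - ∑ k ∈ Finset.range (d+1), (((c k).re : ℝ):ℂ) * (Complex.I * ω) ^ (-(k:ℤ))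
      = ((Complex.exp (Complex.I * ω * T) * (r (ν * ω) : ℂ)
            - ∑ k ∈ Finset.range (d+1), c k * (Complex.I * ω) ^ (-(k:ℤ)))
        + (starRingEnd ℂ) (Complex.exp (Complex.I * ((-ω : ℝ):ℂ) * T) * (r (ν * (-ω)) : ℂ)
            - ∑ k ∈ Finset.range (d+1), c k * (Complex.I * ((-ω : ℝ):ℂ)) ^ (-(k:ℤ)))) / 2 := by
    rw [map_sub, map_sum, Finset.sum_congr rfl hconjz, hconjf, eq_div_iff (two_ne_zero' ℂ)]
    rw [← Finset.sum_mul] at h2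
    linear_combination -h2
  have hE : Complex.exp (Complex.I * ω * T) * (r (ν * ω) : ℂ)
      - ∑ k ∈ Finset.Icc 1 d, (((c k).re : ℝ):ℂ) * (Complex.I * ω) ^ (-(k:ℤ))
      = ((Complex.exp (Complex.I * ω * T) * (r (ν * ω) : ℂ)
            - ∑ k ∈ Finset.range (d+1), c k * (Complex.I * ω) ^ (-(k:ℤ)))
        + (starRingEnd ℂ) (Complex.exp (Complex.I * ((-ω : ℝ):ℂ) * T) * (r (ν * (-ω)) : ℂ)
            - ∑ k ∈ Finset.range (d+1), c k * (Complex.I * ((-ω : ℝ):ℂ)) ^ (-(k:ℤ)))) / 2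
        + (((c 0).re : ℝ):ℂ) := by
    rw [hIcc, ← key]
    ring
  rw [hE]
  have hD1 := H ω hω
  have hD2 := H (-ω) hω'
  push_cast at hD2
  refine le_trans (norm_add_le _ _) ?_
  have hn1 : ‖((Complex.exp (Complex.I * ω * T) * (r (ν * ω) : ℂ)
            - ∑ k ∈ Finset.range (d+1), c k * (Complex.I * ω) ^ (-(k:ℤ)))
        + (starRingEnd ℂ) (Complex.exp (Complex.I * ((-ω : ℝ):ℂ) * T) * (r (ν * (-ω)) : ℂ)
            - ∑ k ∈ Finset.range (d+1), c k * (Complex.I * ((-ω : ℝ):ℂ)) ^ (-(k:ℤ)))) / 2‖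
      ≤ (‖Complex.exp (Complex.I * ω * T) * (r (ν * ω) : ℂ)
            - ∑ k ∈ Finset.range (d+1), c k * (Complex.I * ω) ^ (-(k:ℤ))‖
        + ‖Complex.exp (Complex.I * ((-ω : ℝ):ℂ) * T) * (r (ν * (-ω)) : ℂ)
            - ∑ k ∈ Finset.range (d+1), c k * (Complex.I * ((-ω : ℝ):ℂ)) ^ (-(k:ℤ))‖) / 2 := by
    rw [norm_div]
    have : ‖(2:ℂ)‖ = 2 := by norm_num
    rw [this]
    apply div_le_div_of_nonneg_right ?_ (by norm_num)
    · refine le_trans (norm_add_le _ _) ?_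
      rw [RCLike.norm_conj]
  have hn2 : ‖(((c 0).re : ℝ):ℂ)‖ = |(c 0).re| := by
    rw [Complex.norm_real, Real.norm_eq_abs]
  rw [hn2]
  have hD2' : ‖Complex.exp (Complex.I * ((-ω : ℝ):ℂ) * T) * (r (ν * (-ω)) : ℂ)
      - ∑ k ∈ Finset.range (d+1), c k * (Complex.I * ((-ω : ℝ):ℂ)) ^ (-(k:ℤ))‖ < 2 * (ε₂/3) := by
    push_cast
    convert hD2 using 4 <;> push_cast <;> ring
  linarith
end

section
/- Fix Ω > 0, T > 0, ν > 0, and r_ν as above. For every ε > 0 there exist d ≥ 1 and real numbers γ₁,…,γ_d with γ_{2m+1} = 0 for all integers m ≥ 0 (only even-index coefficients nonzero) such that sup_{|ω| ≥ Ω} |cos(Tω) r_ν(ω) − Σ_{k=1}^d γ_k ω^{−k}| ≤ ε. -/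
open MeasureTheory Filter Set
open scoped Topology Polynomial

theorem stmt3
    (r : ℝ → ℝ) (hr_cont : Continuous r)
    (hr_pos : ∀ ω, 0 < r ω) (hr_le : ∀ ω, r ω ≤ 1)
    (hr0 : r 0 = 1) (hr_even : ∀ ω, r (-ω) = r ω)
    (hr_anti : AntitoneOn r (Set.Ici 0))
    (hr_lim : Tendsto r (cocompact ℝ) (nhds 0))
    (Ω T ν : ℝ) (hΩ : 0 < Ω) (hT : 0 < T) (hν : 0 < ν)
    (ε : ℝ) (hε : 0 < ε) :
    ∃ d : ℕ, 1 ≤ d ∧ ∃ γ : ℕ → ℝ, (∀ m : ℕ, γ (2 * m + 1) = 0) ∧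
      ∀ ω : ℝ, Ω ≤ |ω| →
        |Real.cos (T * ω) * r (ν * ω) -
          ∑ k ∈ Finset.Icc 1 d, γ k * ω ^ (-(k : ℤ))| ≤ ε := by
  classical
  have hA : (0:ℝ) < Ω⁻¹ := inv_pos.mpr hΩ
  set g : ℝ → ℝ := fun x => if x = 0 then 0 else Real.cos (T / x) * r (ν / x) with hg_def
  have hg0 : g 0 = 0 := if_pos rfl
  have hgx : ∀ x : ℝ, x ≠ 0 → g x = Real.cos (T / x) * r (ν / x) := fun x hx => if_neg hx
  -- the map x ↦ ν / x escapes to infinity near 0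
  have hneg : Tendsto (fun x : ℝ => -x) (𝓝[<] (0:ℝ)) (𝓝[>] (0:ℝ)) := by
    apply tendsto_nhdsWithin_of_tendsto_nhds_of_eventually_within
    · exact (continuous_neg.tendsto' 0 0 (by simp)).mono_left nhdsWithin_le_nhds
    · filter_upwards [self_mem_nhdsWithin] with x (hx : x < 0)
      simpa using hx
  have hleft : Tendsto (fun x : ℝ => ν / x) (𝓝[<] (0:ℝ)) atBot := by
    have h1 : Tendsto (fun x : ℝ => ν * (-x)⁻¹) (𝓝[<] (0:ℝ)) atTop :=
      (tendsto_inv_nhdsGT_zero.comp hneg).const_mul_atTop hν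
    have h2 : Tendsto (fun x : ℝ => -(ν * (-x)⁻¹)) (𝓝[<] (0:ℝ)) atBot :=
      tendsto_neg_atTop_atBot.comp h1
    refine h2.congr fun x => ?_
    rw [inv_neg, div_eq_mul_inv]; ring
  have hright : Tendsto (fun x : ℝ => ν / x) (𝓝[>] (0:ℝ)) atTop := by
    have h1 : Tendsto (fun x : ℝ => ν * x⁻¹) (𝓝[>] (0:ℝ)) atTop :=
      tendsto_inv_nhdsGT_zero.const_mul_atTop hν
    exact h1.congr fun x => (div_eq_mul_inv ν x).symm
  have htend : Tendsto (fun x : ℝ => ν / x) (𝓝[≠] (0:ℝ)) (cocompact ℝ) := by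
    rw [cocompact_eq_atBot_atTop, ← nhdsLT_sup_nhdsGT (0:ℝ), tendsto_sup]
    exact ⟨hleft.mono_right le_sup_left, hright.mono_right le_sup_right⟩
  have hrg : Tendsto (fun x : ℝ => r (ν / x)) (𝓝[≠] (0:ℝ)) (𝓝 0) := hr_lim.comp htend
  -- g is continuous
  have hg_cont : Continuous g := by
    rw [continuous_iff_continuousAt]
    intro x
    rcases eq_or_ne x 0 with rfl | hx
    · have h1 : Tendsto g (𝓝[≠] (0:ℝ)) (𝓝 0) := by
        apply squeeze_zero_norm' _ hrg
        filter_upwards [self_mem_nhdsWithin] with x (hx : x ≠ 0)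
        rw [hgx x hx, Real.norm_eq_abs, abs_mul]
        calc |Real.cos (T / x)| * |r (ν / x)| ≤ 1 * |r (ν / x)| := by
              gcongr; exact Real.abs_cos_le_one _
          _ = r (ν / x) := by rw [one_mul, abs_of_pos (hr_pos _)]
      have h2 : Tendsto g (pure (0:ℝ)) (𝓝 0) := by
        simpa [hg0] using tendsto_pure_nhds g (0:ℝ)
      have h3 := h1.sup h2
      rw [nhdsNE_sup_pure] at h3
      rw [ContinuousAt, hg0]
      exact h3
    · have hc : ContinuousAt (fun x => Real.cos (T / x) * r (ν / x)) x :=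
        ((Real.continuous_cos.continuousAt).comp (continuousAt_const.div continuousAt_id hx)).mul
          (hr_cont.continuousAt.comp (continuousAt_const.div continuousAt_id hx))
      apply hc.congr
      filter_upwards [isOpen_compl_singleton.mem_nhds hx] with y (hy : y ≠ 0)
      exact (hgx y hy).symm
  -- g is even
  have hg_even : ∀ x, g (-x) = g x := by
    intro x
    rcases eq_or_ne x 0 with rfl | hx
    · simp
    · rw [hgx x hx, hgx (-x) (neg_ne_zero.mpr hx), div_neg, div_neg, Real.cos_neg, hr_even]
  -- Weierstrass approximation
  obtain ⟨p, hp⟩ := exists_polynomial_near_of_continuousOn (-Ω⁻¹) Ω⁻¹ g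
    hg_cont.continuousOn (ε / 2) (by positivity)
  set d : ℕ := p.natDegree + 1 with hd_def
  set γ : ℕ → ℝ := fun k => if Odd k then 0 else p.coeff k with hγ_def
  refine ⟨d, Nat.le_add_left 1 _, γ, fun m => if_pos ⟨m, by ring⟩, ?_⟩
  intro ω hω
  have hω0 : ω ≠ 0 := by
    intro h; rw [h, abs_zero] at hω; exact absurd hω (not_le.mpr hΩ)
  set x : ℝ := ω⁻¹ with hx_def
  have hx0 : x ≠ 0 := inv_ne_zero hω0
  have hxmem : x ∈ Set.Icc (-Ω⁻¹) Ω⁻¹ := by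
    rw [Set.mem_Icc, ← abs_le, hx_def, abs_inv]
    exact inv_anti₀ hΩ hω
  have hxmem' : -x ∈ Set.Icc (-Ω⁻¹) Ω⁻¹ := by
    rw [Set.mem_Icc, ← abs_le, abs_neg]; rw [Set.mem_Icc, ← abs_le] at hxmem; exact hxmem
  have h0mem : (0:ℝ) ∈ Set.Icc (-Ω⁻¹) Ω⁻¹ := by
    constructor <;> [linarith; linarith]
  -- the sum equals the even part of the polynomial minus its constant term
  have hsum : ∑ k ∈ Finset.Icc 1 d, γ k * ω ^ (-(k : ℤ))
      = (p.eval x + p.eval (-x)) / 2 - p.coeff 0 := by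
    have hpow : ∀ k : ℕ, ω ^ (-(k : ℤ)) = x ^ k := by
      intro k
      rw [zpow_neg, zpow_natCast, hx_def, inv_pow]
    have hlt : p.natDegree < d + 1 := by omega
    have he1 : p.eval x = ∑ k ∈ Finset.range (d + 1), p.coeff k * x ^ k :=
      Polynomial.eval_eq_sum_range' hlt x
    have he2 : p.eval (-x) = ∑ k ∈ Finset.range (d + 1), p.coeff k * (-x) ^ k :=
      Polynomial.eval_eq_sum_range' hlt (-x)
    have hterm : ∀ k ∈ Finset.range (d + 1),
        (p.coeff k * x ^ k + p.coeff k * (-x) ^ k) / 2 = γ k * x ^ k := by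
      intro k _
      rcases Nat.even_or_odd k with he | ho
      · rw [he.neg_pow, hγ_def]
        simp only [Nat.not_odd_iff_even.mpr he, if_false]
        ring
      · rw [ho.neg_pow, hγ_def]
        simp only [ho, if_true]
        ring
    have hrange : Finset.range (d + 1) = insert 0 (Finset.Icc 1 d) := by
      ext k
      simp only [Finset.mem_range, Finset.mem_insert, Finset.mem_Icc]
      omega
    have h0notin : (0:ℕ) ∉ Finset.Icc 1 d := by simp
    calc ∑ k ∈ Finset.Icc 1 d, γ k * ω ^ (-(k : ℤ))
        = ∑ k ∈ Finset.Icc 1 d, γ k * x ^ k := by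
          refine Finset.sum_congr rfl fun k _ => by rw [hpow]
      _ = (γ 0 * x ^ 0 + ∑ k ∈ Finset.Icc 1 d, γ k * x ^ k) - γ 0 * x ^ 0 := by ring
      _ = (∑ k ∈ Finset.range (d + 1), γ k * x ^ k) - p.coeff 0 := by
          rw [hrange, Finset.sum_insert h0notin]
          have : γ 0 = p.coeff 0 := by
            rw [hγ_def]; simp [Nat.odd_iff]
          rw [this, pow_zero, mul_one]
      _ = (p.eval x + p.eval (-x)) / 2 - p.coeff 0 := by
          rw [he1, he2, ← Finset.sum_add_distrib, Finset.sum_div,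
            Finset.sum_congr rfl hterm]
  -- identify the target with g x
  have hgval : Real.cos (T * ω) * r (ν * ω) = g x := by
    have e1 : T / ω⁻¹ = T * ω := by field_simp
    have e2 : ν / ω⁻¹ = ν * ω := by field_simp
    rw [hgx x hx0, hx_def, e1, e2]
  -- assemble the estimate
  have ha : |p.eval x - g x| < ε / 2 := hp x hxmem
  have hb : |p.eval (-x) - g x| < ε / 2 := by
    have := hp (-x) hxmem'
    rwa [hg_even x] at this
  have hc : |p.coeff 0| < ε / 2 := by
    have h := hp 0 h0mem
    rw [hg0, sub_zero] at h
    rwa [Polynomial.coeff_zero_eq_eval_zero]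
  rw [hgval, hsum]
  have key : g x - ((p.eval x + p.eval (-x)) / 2 - p.coeff 0)
      = p.coeff 0 - ((p.eval x - g x) + (p.eval (-x) - g x)) / 2 := by ring
  rw [key]
  calc |p.coeff 0 - ((p.eval x - g x) + (p.eval (-x) - g x)) / 2|
      ≤ |p.coeff 0| + |((p.eval x - g x) + (p.eval (-x) - g x)) / 2| := abs_sub _ _
    _ ≤ |p.coeff 0| + (|p.eval x - g x| + |p.eval (-x) - g x|) / 2 := by
        rw [abs_div]
        have := abs_add_le (p.eval x - g x) (p.eval (-x) - g x)
        have h2 : |(2:ℝ)| = 2 := by norm_num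
        rw [h2]
        gcongr
    _ ≤ ε := by linarith
end

section
/- Fix Ω > 0, T > 0, ν > 0, and r_ν as above. For every ε > 0 there exist d ≥ 1 and real numbers γ₁,…,γ_d with γ_{2m} = 0 for all integers m ≥ 1 (only odd-index coefficients nonzero) such that sup_{|ω| ≥ Ω} |sin(Tω) r_ν(ω) − Σ_{k=1}^d γ_k ω^{−k}| ≤ ε. -/
open MeasureTheory Filter Set

theorem stmt4
    (r : ℝ → ℝ) (hr_cont : Continuous r)
    (hr_pos : ∀ ω, 0 < r ω) (hr_le : ∀ ω, r ω ≤ 1)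
    (hr0 : r 0 = 1) (hr_even : ∀ ω, r (-ω) = r ω)
    (hr_anti : AntitoneOn r (Set.Ici 0))
    (hr_lim : Tendsto r (cocompact ℝ) (nhds 0))
    (Ω T ν : ℝ) (hΩ : 0 < Ω) (hT : 0 < T) (hν : 0 < ν)
    (ε : ℝ) (hε : 0 < ε) :
    ∃ d : ℕ, 1 ≤ d ∧ ∃ γ : ℕ → ℝ, (∀ m : ℕ, 1 ≤ m → γ (2 * m) = 0) ∧
      ∀ ω : ℝ, Ω ≤ |ω| →
        |Real.sin (T * ω) * r (ν * ω) -
          ∑ k ∈ Finset.Icc 1 d, γ k * ω ^ (-(k : ℤ))| ≤ ε := by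
  classical
  -- the odd continuous extension of ω ↦ sin(Tω) r(νω) under x = 1/ω
  set g : ℝ → ℝ := fun x => if x = 0 then 0 else Real.sin (T / x) * r (ν / x) with hg
  have hg_bound : ∀ x : ℝ, x ≠ 0 → |g x| ≤ r (ν / x) := by
    intro x hx
    simp only [hg, if_neg hx, abs_mul]
    calc |Real.sin (T / x)| * |r (ν / x)| ≤ 1 * |r (ν / x)| := by
          gcongr
          exact Real.abs_sin_le_one _
      _ = r (ν / x) := by rw [one_mul, abs_of_pos (hr_pos _)]
  have hg_cont : Continuous g := by
    rw [continuous_iff_continuousAt]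
    intro x₀
    rcases eq_or_ne x₀ 0 with rfl | hx₀
    · have h0 : g 0 = 0 := by simp [hg]
      rw [ContinuousAt, h0, Metric.tendsto_nhds]
      intro ε' hε'
      obtain ⟨K, hK, hKr⟩ := (hasBasis_cocompact.tendsto_left_iff.mp hr_lim) _
        (Metric.ball_mem_nhds 0 hε')
      obtain ⟨M, hM⟩ := hK.isBounded.subset_closedBall 0
      have hM' : (0:ℝ) < |M| + 1 := by positivity
      have hδ : (0:ℝ) < ν / (|M| + 1) := by positivity
      rw [Metric.eventually_nhds_iff]
      refine ⟨ν / (|M| + 1), hδ, fun {x} hx => ?_⟩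
      rcases eq_or_ne x 0 with rfl | hx0
      · simpa [h0] using hε'
      · have hxabs : 0 < |x| := abs_pos.mpr hx0
        rw [Real.dist_eq, sub_zero] at hx
        have hlarge : |M| + 1 < |ν / x| := by
          rw [abs_div, abs_of_pos hν, lt_div_iff₀ hxabs]
          calc (|M| + 1) * |x| < (|M| + 1) * (ν / (|M| + 1)) := by gcongr
            _ = ν := by field_simp
        have hnotin : ν / x ∉ K := by
          intro hmem
          have := hM hmem
          rw [Metric.mem_closedBall, Real.dist_eq, sub_zero] at this
          have : |M| + 1 ≤ |M| := le_trans (le_of_lt hlarge) (this.trans (le_abs_self M))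
          linarith
        have hr' : r (ν / x) < ε' := by
          have := hKr hnotin
          rw [Metric.mem_ball, Real.dist_eq, sub_zero] at this
          exact lt_of_le_of_lt (le_abs_self _) this
        rw [Real.dist_eq, sub_zero]
        calc |g x| ≤ r (ν / x) := hg_bound x hx0
          _ < ε' := hr'
    · have heq : ∀ᶠ x in nhds x₀, Real.sin (T / x) * r (ν / x) = g x := by
        filter_upwards [isOpen_compl_singleton.mem_nhds hx₀] with x hx
        simp only [hg, if_neg (by simpa using hx : x ≠ 0)]
      have hc : ContinuousAt (fun x => Real.sin (T / x) * r (ν / x)) x₀ := by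
        have hdiv : ∀ c : ℝ, ContinuousAt (fun x => c / x) x₀ :=
          fun c => continuousAt_const.div continuousAt_id hx₀
        exact ((Real.continuous_sin.continuousAt).comp (hdiv T)).mul
          ((hr_cont.continuousAt).comp (hdiv ν))
      exact hc.congr heq
  -- Weierstrass approximation on [-Ω⁻¹, Ω⁻¹]
  obtain ⟨p, hp⟩ := exists_polynomial_near_of_continuousOn (-Ω⁻¹) Ω⁻¹ g
    hg_cont.continuousOn (ε / 2) (by linarith)
  set d : ℕ := max p.natDegree 1 with hd
  refine ⟨d, le_max_right _ _, fun k => if Even k then 0 else p.coeff k, ?_, ?_⟩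
  · intro m _
    simp
  set γ : ℕ → ℝ := fun k => if Even k then 0 else p.coeff k with hγ
  -- the symmetrization identity
  have hsum : ∀ x : ℝ, (∑ k ∈ Finset.Icc 1 d, γ k * x ^ k)
      = (p.eval x - p.eval (-x)) / 2 := by
    intro x
    have hdlt : p.natDegree < d + 1 := Nat.lt_succ_of_le (le_max_left _ _)
    rw [Polynomial.eval_eq_sum_range' hdlt, Polynomial.eval_eq_sum_range' hdlt,
      ← Finset.sum_sub_distrib, Finset.sum_div]
    have hsub : Finset.Icc 1 d ⊆ Finset.range (d + 1) := by
      intro k hk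
      simp only [Finset.mem_Icc] at hk
      simp only [Finset.mem_range]
      omega
    rw [← Finset.sum_subset hsub]
    · refine Finset.sum_congr rfl fun k _ => ?_
      by_cases hk : Even k
      · rw [hγ]; simp only [if_pos hk, hk.neg_pow]
        ring
      · rw [hγ]; simp only [if_neg hk, (Nat.not_even_iff_odd.mp hk).neg_pow]
        ring
    · intro k hk hk'
      have : k = 0 := by
        simp only [Finset.mem_range, Finset.mem_Icc] at hk hk'
        omega
      subst this
      simp [hγ]
  intro ω hω
  have hω0 : ω ≠ 0 := fun h => by simp [h] at hω; linarith
  have hxabs : |ω⁻¹| ≤ Ω⁻¹ := by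
    rw [abs_inv]
    exact inv_anti₀ hΩ hω
  have hx : ω⁻¹ ∈ Set.Icc (-Ω⁻¹) Ω⁻¹ := abs_le.mp hxabs
  have hnx : -ω⁻¹ ∈ Set.Icc (-Ω⁻¹) Ω⁻¹ := abs_le.mp (by rwa [abs_neg])
  have hgx : g ω⁻¹ = Real.sin (T * ω) * r (ν * ω) := by
    simp only [hg, if_neg (inv_ne_zero hω0), div_eq_mul_inv, inv_inv]
  have hgnx : g (-ω⁻¹) = -(Real.sin (T * ω) * r (ν * ω)) := by
    have h1 : -ω⁻¹ ≠ 0 := neg_ne_zero.mpr (inv_ne_zero hω0)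
    have e1 : T / -ω⁻¹ = -(T * ω) := by field_simp
    have e2 : ν / -ω⁻¹ = -(ν * ω) := by field_simp
    simp only [hg, if_neg h1, e1, e2, Real.sin_neg, hr_even]
    ring
  have hzpow : ∀ k : ℕ, ω ^ (-(k : ℤ)) = (ω⁻¹) ^ k := by
    intro k
    rw [zpow_neg, zpow_natCast, inv_pow]
  have hsumeq : (∑ k ∈ Finset.Icc 1 d, γ k * ω ^ (-(k : ℤ)))
      = (p.eval ω⁻¹ - p.eval (-ω⁻¹)) / 2 := by
    rw [← hsum ω⁻¹]
    exact Finset.sum_congr rfl fun k _ => by rw [hzpow k]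
  have h1 := hp ω⁻¹ hx
  have h2 := hp (-ω⁻¹) hnx
  rw [abs_sub_comm] at h1 h2
  rw [hsumeq]
  have hkey : Real.sin (T * ω) * r (ν * ω) - (p.eval ω⁻¹ - p.eval (-ω⁻¹)) / 2
      = ((g ω⁻¹ - p.eval ω⁻¹) - (g (-ω⁻¹) - p.eval (-ω⁻¹))) / 2 := by
    rw [hgx, hgnx]; ring
  rw [hkey, abs_div, abs_two]
  have habs : |(g ω⁻¹ - p.eval ω⁻¹) - (g (-ω⁻¹) - p.eval (-ω⁻¹))|
      ≤ |g ω⁻¹ - p.eval ω⁻¹| + |g (-ω⁻¹) - p.eval (-ω⁻¹)| := abs_sub _ _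
  linarith
end

section
/- Let x : ℝ → ℝ be bounded continuous with Fourier transform X ∈ L¹(ℝ, ℂ), so that x(t) = (1/2π)∫ e^{iωt} X(ω) dω. Suppose X(ω) = 0 for |ω| < Ω. Let ψ_d(iω) = Σ_{k=1}^d a_k (iω)^{−k} with a_k ∈ ℝ, and define ŷ(t) = (1/2π)∫ e^{iωt} ψ_d(iω) X(ω) dω. If ∫(1 − r_ν(ω))|X(ω)|dω ≤ ε₁ and sup_{|ω|≥Ω} |e^{iωT} r_ν(ω) − ψ_d(iω)| ≤ ε₂ with ε₁ + ε₂ ≤ 2πε and ∫|X(ω)|dω ≤ 1, then sup_{t∈ℝ} |x(t+T) − ŷ(t)| ≤ ε. -/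
open MeasureTheory Filter Set Complex

set_option maxHeartbeats 1000000 in
theorem stmt6
    (Ω T ν ε ε₁ ε₂ : ℝ) (hΩ : 0 < Ω) (hT : 0 < T) (hν : 0 < ν)
    (hε : 0 < ε) (hε₁ : 0 < ε₁) (hε₂ : 0 < ε₂)
    (rν : ℝ → ℝ) (hrν : ∀ ω, rν ω ∈ Set.Ioc (0 : ℝ) 1) (hrν_meas : Measurable rν)
    (x : ℝ → ℝ) (hx_cont : Continuous x) (hx_bdd : ∃ C, ∀ t, |x t| ≤ C)
    (X : ℝ → ℂ) (hX_int : Integrable X)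
    (hX_norm : (∫ ω, ‖X ω‖) ≤ 1)
    (hgap : ∀ ω : ℝ, |ω| < Ω → X ω = 0)
    (hinv : ∀ t : ℝ, (x t : ℂ) =
      (1 / (2 * Real.pi)) * ∫ ω : ℝ, Complex.exp (Complex.I * ω * t) * X ω)
    (d : ℕ) (a : ℕ → ℝ)
    (yhat : ℝ → ℂ)
    (hyhat : ∀ t : ℝ, yhat t = (1 / (2 * Real.pi)) *
      ∫ ω : ℝ, Complex.exp (Complex.I * ω * t) *
        (∑ k ∈ Finset.Icc 1 d, (a k : ℂ) * (Complex.I * ω) ^ (-(k : ℤ))) * X ω)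
    (h1 : (∫ ω, (1 - rν ω) * ‖X ω‖) ≤ ε₁)
    (h2 : ∀ ω : ℝ, Ω ≤ |ω| →
      ‖Complex.exp (Complex.I * ω * T) * (rν ω : ℂ) -
        ∑ k ∈ Finset.Icc 1 d, (a k : ℂ) * (Complex.I * ω) ^ (-(k : ℤ))‖ ≤ ε₂)
    (hsum : ε₁ + ε₂ ≤ 2 * Real.pi * ε) :
    ∀ t : ℝ, ‖(x (t + T) : ℂ) - yhat t‖ ≤ ε := by
  intro t
  have hπ : (0 : ℝ) < 2 * Real.pi := by positivity
  set ψ : ℝ → ℂ := fun ω => ∑ k ∈ Finset.Icc 1 d, (a k : ℂ) * (Complex.I * ω) ^ (-(k : ℤ))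
    with hψdef
  set f : ℝ → ℂ := fun ω => Complex.exp (Complex.I * ω * ((t + T : ℝ) : ℂ)) * X ω with hfdef
  set g : ℝ → ℂ := fun ω => Complex.exp (Complex.I * ω * t) * ψ ω * X ω with hgdef
  set M : ℝ := ∑ k ∈ Finset.Icc 1 d, |a k| * (Ω ^ k)⁻¹ with hMdef
  have hM0 : 0 ≤ M := Finset.sum_nonneg fun k _ => by positivity
  have hψ_meas : Measurable ψ := by measurability
  -- pointwise bound on ψ * X
  have hψX : ∀ ω : ℝ, ‖ψ ω * X ω‖ ≤ M * ‖X ω‖ := by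
    intro ω
    by_cases hX0 : X ω = 0
    · simp [hX0]
    · have hωΩ : Ω ≤ |ω| := le_of_not_gt fun h => hX0 (hgap ω h)
      have hω0 : (0:ℝ) < |ω| := lt_of_lt_of_le hΩ hωΩ
      rw [norm_mul]
      refine mul_le_mul_of_nonneg_right ?_ (norm_nonneg _)
      calc ‖ψ ω‖ ≤ ∑ k ∈ Finset.Icc 1 d, ‖(a k : ℂ) * (Complex.I * ω) ^ (-(k : ℤ))‖ :=
            norm_sum_le _ _
        _ ≤ M := by
            refine Finset.sum_le_sum fun k _ => ?_
            rw [norm_mul, Complex.norm_real, norm_zpow]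
            have hnI : ‖Complex.I * (ω : ℂ)‖ = |ω| := by
              rw [norm_mul, Complex.norm_I, Complex.norm_real, one_mul, Real.norm_eq_abs]
            rw [hnI, zpow_neg, zpow_natCast, Real.norm_eq_abs]
            refine mul_le_mul_of_nonneg_left ?_ (abs_nonneg _)
            exact inv_anti₀ (by positivity) (pow_le_pow_left₀ hΩ.le hωΩ k)
  -- integrability
  have hexp_meas : ∀ s : ℝ, Measurable fun ω : ℝ => Complex.exp (Complex.I * ω * s) := by
    intro s
    exact Complex.measurable_exp.comp
      ((measurable_const.mul Complex.measurable_ofReal).mul measurable_const)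
  have hf_int : Integrable f := by
    refine (hX_int.bdd_mul ((hexp_meas (t+T)).aestronglyMeasurable) (c := 1) (ae_of_all _ fun ω => ?_))
    simp [Complex.norm_exp]
  have hg_int : Integrable g := by
    refine Integrable.mono (hX_int.norm.const_mul M)
      (((hexp_meas t).mul hψ_meas).aestronglyMeasurable.mul hX_int.aestronglyMeasurable)
      (ae_of_all _ fun ω => ?_)
    have h1' : ‖Complex.exp (Complex.I * ω * t) * ψ ω * X ω‖ = ‖ψ ω * X ω‖ := by
      rw [mul_assoc, norm_mul]
      simp [Complex.norm_exp]
    have h2' : ‖M * ‖X ω‖‖ = M * ‖X ω‖ := by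
      rw [Real.norm_eq_abs, _root_.abs_of_nonneg (by positivity)]
    rw [h2']
    simp only [hgdef]
    exact h1'.le.trans (hψX ω)
  -- pointwise bound on f - g
  have hkey : ∀ ω : ℝ, ‖f ω - g ω‖ ≤ (1 - rν ω) * ‖X ω‖ + ε₂ * ‖X ω‖ := by
    intro ω
    obtain ⟨hr0, hr1⟩ := hrν ω
    by_cases hX0 : X ω = 0
    · simp only [hfdef, hgdef, hX0, mul_zero, sub_zero, norm_zero]
      positivity
    · have hωΩ : Ω ≤ |ω| := le_of_not_gt fun h => hX0 (hgap ω h)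
      have hsplit : f ω - g ω =
          Complex.exp (Complex.I * ω * t) *
            (Complex.exp (Complex.I * ω * T) - ψ ω) * X ω := by
        simp only [hfdef, hgdef]
        have h3' : Complex.I * ω * ((t + T : ℝ) : ℂ) =
            Complex.I * ω * t + Complex.I * ω * T := by push_cast; ring
        rw [h3', Complex.exp_add]
        ring
      rw [hsplit, mul_assoc, norm_mul]
      have he1 : ‖Complex.exp (Complex.I * (ω:ℂ) * t)‖ = 1 := by simp [Complex.norm_exp]
      rw [he1, one_mul, norm_mul]
      have hbound : ‖Complex.exp (Complex.I * ω * T) - ψ ω‖ ≤ (1 - rν ω) + ε₂ := by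
        have hdecomp : Complex.exp (Complex.I * ω * T) - ψ ω =
            Complex.exp (Complex.I * ω * T) * (1 - (rν ω : ℂ)) +
            (Complex.exp (Complex.I * ω * T) * (rν ω : ℂ) - ψ ω) := by ring
        rw [hdecomp]
        refine (norm_add_le _ _).trans (add_le_add ?_ (h2 ω hωΩ))
        rw [norm_mul]
        have he2 : ‖Complex.exp (Complex.I * (ω:ℂ) * T)‖ = 1 := by simp [Complex.norm_exp]
        rw [he2, one_mul]
        have : ((1 : ℂ) - (rν ω : ℂ)) = ((1 - rν ω : ℝ) : ℂ) := by push_cast; ring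
        rw [this, Complex.norm_real, Real.norm_eq_abs, _root_.abs_of_nonneg (by linarith)]
      calc ‖Complex.exp (Complex.I * ω * T) - ψ ω‖ * ‖X ω‖
          ≤ ((1 - rν ω) + ε₂) * ‖X ω‖ :=
            mul_le_mul_of_nonneg_right hbound (norm_nonneg _)
        _ = (1 - rν ω) * ‖X ω‖ + ε₂ * ‖X ω‖ := by ring
  -- integrability of the majorant pieces
  have hr_int : Integrable (fun ω => (1 - rν ω) * ‖X ω‖) := by
    refine Integrable.mono hX_int.norm
      (((measurable_const.sub hrν_meas).aestronglyMeasurable).mul hX_int.norm.aestronglyMeasurable)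
      (ae_of_all _ fun ω => ?_)
    obtain ⟨hr0, hr1⟩ := hrν ω
    rw [Real.norm_eq_abs, Real.norm_eq_abs,
      _root_.abs_of_nonneg (mul_nonneg (by linarith) (norm_nonneg _)), abs_norm]
    nlinarith [norm_nonneg (X ω)]
  have hmaj_int : Integrable (fun ω => (1 - rν ω) * ‖X ω‖ + ε₂ * ‖X ω‖) :=
    hr_int.add (hX_int.norm.const_mul ε₂)
  -- integral bound
  have hIbound : (∫ ω, ‖f ω - g ω‖) ≤ ε₁ + ε₂ := by
    have hle : (∫ ω, ‖f ω - g ω‖) ≤ ∫ ω, ((1 - rν ω) * ‖X ω‖ + ε₂ * ‖X ω‖) :=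
      integral_mono (hf_int.sub hg_int).norm hmaj_int hkey
    have heq : (∫ ω, ((1 - rν ω) * ‖X ω‖ + ε₂ * ‖X ω‖)) =
        (∫ ω, (1 - rν ω) * ‖X ω‖) + ε₂ * ∫ ω, ‖X ω‖ := by
      rw [integral_add hr_int (hX_int.norm.const_mul ε₂), integral_const_mul]
    refine hle.trans ?_
    rw [heq]
    have : ε₂ * ∫ ω, ‖X ω‖ ≤ ε₂ * 1 := mul_le_mul_of_nonneg_left hX_norm hε₂.le
    linarith
  -- main identity
  have hmain : (x (t + T) : ℂ) - yhat t = (1 / (2 * Real.pi)) * ∫ ω, (f ω - g ω) := by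
    rw [hinv (t + T), hyhat t, integral_sub hf_int hg_int]
    ring
  rw [hmain, norm_mul]
  have hc : ‖(1 / (2 * Real.pi) : ℂ)‖ = 1 / (2 * Real.pi) := by
    rw [show (1 / (2 * (Real.pi : ℂ))) = ((1 / (2 * Real.pi) : ℝ) : ℂ) by push_cast; ring,
      Complex.norm_real, Real.norm_eq_abs, _root_.abs_of_nonneg (by positivity)]
  rw [hc]
  have hnorm : ‖∫ ω, (f ω - g ω)‖ ≤ ε₁ + ε₂ :=
    (norm_integral_le_integral_norm _).trans hIbound
  calc (1 / (2 * Real.pi)) * ‖∫ ω, (f ω - g ω)‖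
      ≤ (1 / (2 * Real.pi)) * (2 * Real.pi * ε) := by
        refine mul_le_mul_of_nonneg_left (hnorm.trans hsum) (by positivity)
    _ = ε := by field_simp
end

section
/- Fix Ω > 0 and T > 0. For every ε > 0 and every bounded continuous x : ℝ → ℝ whose Fourier transform X is integrable, satisfies ‖X‖_{L¹} ≤ 1, and vanishes on (−Ω, Ω), there exist an integer d ≥ 1 and real coefficients a₁,…,a_d (depending on ε only, uniformly over any family with uniformly integrable Fourier tails) such that the function ŷ(t) = (1/2π) ∫ e^{iωt} (Σ_{k=1}^d a_k (iω)^{−k}) X(ω) dω satisfies sup_{t ∈ ℝ} |x(t+T) − ŷ(t)| ≤ ε. -/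
open MeasureTheory Filter Set Complex

lemma weier (c : ℝ) (hc : 0 < c) (g : ℝ → ℝ) (hg : ContinuousOn g (Icc (-c) c))
    (δ : ℝ) (hδ : 0 < δ) :
    ∃ p : Polynomial ℝ, ∀ u ∈ Icc (-c) c, |Polynomial.eval u p - g u| ≤ δ := by
  let G : C(Icc (-c) c, ℝ) := ⟨fun u => g u, hg.restrict⟩
  have hmem : G ∈ closure ((polynomialFunctions (Icc (-c) c)) : Set C(Icc (-c) c, ℝ)) := by
    have := polynomialFunctions_closure_eq_top (-c) c
    have h2 : G ∈ (polynomialFunctions (Icc (-c) c)).topologicalClosure := by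
      rw [this]; trivial
    exact h2
  rw [Metric.mem_closure_iff] at hmem
  obtain ⟨F, hF, hdist⟩ := hmem δ hδ
  rw [polynomialFunctions_coe] at hF
  obtain ⟨p, hp⟩ := hF
  subst hp
  refine ⟨p, fun u hu => ?_⟩
  have h2 := ContinuousMap.dist_apply_le_dist
    (f := Polynomial.toContinuousMapOnAlgHom _ p) (g := G) ⟨u, hu⟩
  have h3 := le_of_lt (lt_of_le_of_lt h2 (dist_comm G _ ▸ hdist))
  simp [G, Real.dist_eq] at h3
  exact h3

lemma approx (c δ : ℝ) (hc : 0 < c) (hδ : 0 < δ) (F : ℝ → ℂ)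
    (hF0 : F 0 = 0) (hherm : ∀ u : ℝ, F (-u) = (starRingEnd ℂ) (F u))
    (hFc : ContinuousOn F (Icc (-c) c)) :
    ∃ d : ℕ, 1 ≤ d ∧ ∃ a : ℕ → ℝ, ∀ u ∈ Icc (-c) c,
      ‖(∑ k ∈ Finset.Icc 1 d, (a k : ℂ) * (-(Complex.I * (u:ℂ)))^k) - F u‖ ≤ δ := by
  have h0mem : (0:ℝ) ∈ Icc (-c) c := ⟨by linarith, by linarith⟩
  obtain ⟨P, hP⟩ := weier c hc (fun u => (F u).re)
    (Complex.continuous_re.comp_continuousOn hFc) (δ/4) (by linarith)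
  obtain ⟨Q, hQ⟩ := weier c hc (fun u => (F u).im)
    (Complex.continuous_im.comp_continuousOn hFc) (δ/4) (by linarith)
  set N : ℕ := max P.natDegree Q.natDegree + 1 with hN
  have hPN : P.natDegree < N := by rw [hN]; omega
  have hQN : Q.natDegree < N := by rw [hN]; omega
  set s : ℕ → ℂ := fun k => (P.coeff k : ℂ) + (Q.coeff k : ℂ) * I with hs
  have hSsum : ∀ u : ℝ, (∑ k ∈ Finset.range N, s k * (u:ℂ)^k)
      = ((Polynomial.eval u P : ℝ) : ℂ) + ((Polynomial.eval u Q : ℝ) : ℂ) * I := by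
    intro u
    rw [Polynomial.eval_eq_sum_range' hPN, Polynomial.eval_eq_sum_range' hQN]
    push_cast
    rw [Finset.sum_mul, ← Finset.sum_add_distrib]
    refine Finset.sum_congr rfl fun k _ => by simp [hs]; ring
  have hSerr : ∀ u ∈ Icc (-c) c,
      ‖(∑ k ∈ Finset.range N, s k * (u:ℂ)^k) - F u‖ ≤ δ/2 := by
    intro u hu
    rw [hSsum u]
    set z : ℂ := ((Polynomial.eval u P : ℝ) : ℂ) + ((Polynomial.eval u Q : ℝ) : ℂ) * I - F u with hz
    have hre : z.re = Polynomial.eval u P - (F u).re := by simp [hz]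
    have him : z.im = Polynomial.eval u Q - (F u).im := by simp [hz]
    calc ‖z‖ ≤ |z.re| + |z.im| := Complex.norm_le_abs_re_add_abs_im z
      _ ≤ δ/4 + δ/4 := by rw [hre, him]; exact add_le_add (hP u hu) (hQ u hu)
      _ = δ/2 := by ring
  set t : ℕ → ℂ := fun k => (s k + (starRingEnd ℂ) (s k) * (-1)^k) / 2 with ht
  have hconjt : ∀ k, (starRingEnd ℂ) (t k) = (-1)^k * t k := by
    intro k
    have h1 : ((-1:ℂ))^k * (-1)^k = 1 := by
      rw [← mul_pow]; norm_num
    have h2 : (starRingEnd ℂ) (t k) = ((starRingEnd ℂ) (s k) + s k * (-1)^k) / 2 := by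
      simp [ht, map_ofNat]
    rw [h2, ht]
    simp only []
    rw [div_eq_iff (two_ne_zero (α := ℂ))]
    linear_combination (-(starRingEnd ℂ) (s k)) * h1
  have hTerr : ∀ u ∈ Icc (-c) c,
      ‖(∑ k ∈ Finset.range N, t k * (u:ℂ)^k) - F u‖ ≤ δ/2 := by
    intro u hu
    obtain ⟨hu1, hu2⟩ := hu
    have hneg : -u ∈ Icc (-c) c := ⟨by linarith, by linarith⟩
    have hkey : (∑ k ∈ Finset.range N, t k * (u:ℂ)^k)
        = ((∑ k ∈ Finset.range N, s k * (u:ℂ)^k)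
          + (starRingEnd ℂ) (∑ k ∈ Finset.range N, s k * ((-u:ℝ):ℂ)^k)) / 2 := by
      rw [map_sum, ← Finset.sum_add_distrib, Finset.sum_div]
      refine Finset.sum_congr rfl fun k _ => ?_
      simp only [ht, map_mul, map_pow, Complex.conj_ofReal]
      push_cast
      ring
    have hrw : (∑ k ∈ Finset.range N, t k * (u:ℂ)^k) - F u
        = (((∑ k ∈ Finset.range N, s k * (u:ℂ)^k) - F u)
          + (starRingEnd ℂ) ((∑ k ∈ Finset.range N, s k * ((-u:ℝ):ℂ)^k) - F (-u))) / 2 := by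
      rw [hkey, map_sub, hherm u, Complex.conj_conj]
      ring
    rw [hrw]
    have hb := hSerr u ⟨hu1, hu2⟩
    have hb2 := hSerr (-u) hneg
    have hnd : ‖(((∑ k ∈ Finset.range N, s k * (u:ℂ)^k) - F u)
          + (starRingEnd ℂ) ((∑ k ∈ Finset.range N, s k * ((-u:ℝ):ℂ)^k) - F (-u))) / 2‖
        = ‖((∑ k ∈ Finset.range N, s k * (u:ℂ)^k) - F u)
          + (starRingEnd ℂ) ((∑ k ∈ Finset.range N, s k * ((-u:ℝ):ℂ)^k) - F (-u))‖ / 2 := by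
      rw [norm_div]
      norm_num
    rw [hnd]
    have hadd := norm_add_le ((∑ k ∈ Finset.range N, s k * (u:ℂ)^k) - F u)
      ((starRingEnd ℂ) ((∑ k ∈ Finset.range N, s k * ((-u:ℝ):ℂ)^k) - F (-u)))
    rw [RCLike.norm_conj] at hadd
    linarith
  have hsum0 : ∑ k ∈ Finset.range N, t k * (0:ℂ)^k = t 0 := by
    rw [Finset.sum_eq_single_of_mem 0 (Finset.mem_range.mpr (by omega))]
    · simp
    · intro k _ hk
      simp [zero_pow hk]
  have ht0 : ‖t 0‖ ≤ δ/2 := by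
    have h0 := hTerr 0 h0mem
    rw [hF0] at h0
    simpa [hsum0] using h0
  have hconjI : ∀ k, ((((Complex.I^k * t k).re : ℝ)) : ℂ) = Complex.I^k * t k := by
    intro k
    refine Complex.conj_eq_iff_re.mp ?_
    rw [map_mul, map_pow, Complex.conj_I, hconjt k, ← mul_assoc, ← mul_pow]
    norm_num
  have hterm : ∀ (k : ℕ) (u : ℝ),
      (((Complex.I^k * t k).re : ℝ) : ℂ) * (-(Complex.I * (u:ℂ)))^k = t k * (u:ℂ)^k := by
    intro k u
    rw [hconjI k]
    have h1 : (-(Complex.I*(u:ℂ)))^k = (-1:ℂ)^k * Complex.I^k * (u:ℂ)^k := by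
      rw [← mul_pow, ← mul_pow]
      ring_nf
    rw [h1]
    have h2 : Complex.I^k * ((-1:ℂ)^k * Complex.I^k) = 1 := by
      rw [← mul_pow, ← mul_pow, show Complex.I * (-1 * Complex.I) = 1 by
        rw [show Complex.I * (-1 * Complex.I) = -(Complex.I * Complex.I) by ring,
          Complex.I_mul_I]; norm_num, one_pow]
    linear_combination (t k * (u:ℂ)^k) * h2
  have htN : t N = 0 := by
    have hsN : s N = 0 := by
      simp [hs, Polynomial.coeff_eq_zero_of_natDegree_lt hPN,
        Polynomial.coeff_eq_zero_of_natDegree_lt hQN]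
    simp [ht, hsN]
  have hsplit : ∀ u : ℝ, ∑ k ∈ Finset.Icc 1 N, t k * (u:ℂ)^k
      = (∑ k ∈ Finset.range N, t k * (u:ℂ)^k) - t 0 := by
    intro u
    have e1 : ∑ k ∈ Finset.range (N+1), t k * (u:ℂ)^k
        = (∑ k ∈ Finset.range N, t k * (u:ℂ)^k) + t N * (u:ℂ)^N :=
      Finset.sum_range_succ _ _
    have e2 : ∑ k ∈ Finset.range (N+1), t k * (u:ℂ)^k
        = t 0 * (u:ℂ)^0 + ∑ k ∈ Finset.Icc 1 N, t k * (u:ℂ)^k := by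
      rw [show Finset.range (N+1) = Finset.Icc 0 N by
        rw [Finset.range_eq_Ico, Finset.Ico_add_one_right_eq_Icc]]
      rw [show Finset.Icc 1 N = (Finset.Icc 0 N).erase 0 by
        rw [Finset.Icc_erase_left, ← Finset.Icc_add_one_left_eq_Ioc, zero_add]]
      exact (Finset.add_sum_erase _ _ (Finset.mem_Icc.mpr (by omega))).symm
    rw [e1, htN] at e2
    simp only [htN, zero_mul, add_zero, pow_zero, mul_one] at e2
    rw [e2]
    ring
  refine ⟨N, by omega, fun k => (Complex.I^k * t k).re, fun u hu => ?_⟩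
  have hss : ∑ k ∈ Finset.Icc 1 N, (((Complex.I^k * t k).re : ℝ) : ℂ) * (-(Complex.I * (u:ℂ)))^k
      = ∑ k ∈ Finset.Icc 1 N, t k * (u:ℂ)^k :=
    Finset.sum_congr rfl fun k _ => hterm k u
  rw [hss, hsplit u]
  have h1 := hTerr u hu
  calc ‖(∑ k ∈ Finset.range N, t k * (u:ℂ)^k) - t 0 - F u‖
      = ‖((∑ k ∈ Finset.range N, t k * (u:ℂ)^k) - F u) + (- t 0)‖ := by congr 1; ring
    _ ≤ ‖(∑ k ∈ Finset.range N, t k * (u:ℂ)^k) - F u‖ + ‖- t 0‖ := norm_add_le _ _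
    _ ≤ δ/2 + δ/2 := by rw [norm_neg]; exact add_le_add h1 ht0
    _ = δ := by ring

lemma tail_small (f : ℝ → ℂ) (hf : Integrable f) (η : ℝ) (hη : 0 < η) :
    ∃ M : ℝ, 1 ≤ M ∧ ∫ ω in (Icc (-M) M)ᶜ, ‖f ω‖ ≤ η := by
  have hfn : Integrable (fun ω => ‖f ω‖) := hf.norm
  have hmeas : ∀ n : ℕ, MeasurableSet (Icc (-(n:ℝ)) n) := fun n => measurableSet_Icc
  have hmono : Monotone (fun n : ℕ => Icc (-(n:ℝ)) n) := by
    intro m n hmn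
    exact Icc_subset_Icc (by have : (m:ℝ) ≤ n := Nat.cast_le.mpr hmn; linarith)
      (by exact_mod_cast hmn)
  have hunion : (⋃ n : ℕ, Icc (-(n:ℝ)) n) = univ := by
    ext y
    simp only [mem_iUnion, mem_univ, iff_true, mem_Icc]
    obtain ⟨n, hn⟩ := exists_nat_ge |y|
    exact ⟨n, by cases abs_le.mp hn; constructor <;> linarith⟩
  have htend := tendsto_setIntegral_of_monotone hmeas hmono
    (by rw [hunion]; exact hfn.integrableOn)
  rw [hunion] at htend
  simp only [Measure.restrict_univ] at htend
  have : ∀ᶠ n : ℕ in atTop, (∫ ω, ‖f ω‖) - η < ∫ ω in Icc (-(n:ℝ)) n, ‖f ω‖ := by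
    refine htend.eventually ?_
    exact eventually_gt_nhds (by linarith)
  obtain ⟨n, hn⟩ := (this.and (eventually_ge_atTop 1)).exists
  refine ⟨n, by exact_mod_cast hn.2, ?_⟩
  have hsplit := integral_add_compl (hmeas n) hfn
  linarith [hn.1]

set_option maxHeartbeats 1000000 in
theorem stmt13
    (Ω T : ℝ) (hΩ : 0 < Ω) (hT : 0 < T)
    (ε : ℝ) (hε : 0 < ε)
    (x : ℝ → ℝ) (hx_cont : Continuous x) (hx_bdd : ∃ C, ∀ t, |x t| ≤ C)
    (X : ℝ → ℂ) (hX_int : Integrable X)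
    (hX_norm : (∫ ω, ‖X ω‖) ≤ 1)
    (hgap : ∀ ω : ℝ, |ω| < Ω → X ω = 0)
    (hinv : ∀ t : ℝ, (x t : ℂ) =
      (1 / (2 * Real.pi)) * ∫ ω : ℝ, Complex.exp (Complex.I * ω * t) * X ω) :
    ∃ d : ℕ, 1 ≤ d ∧ ∃ a : ℕ → ℝ,
      ∀ t : ℝ,
        ‖(x (t + T) : ℂ) - (1 / (2 * Real.pi)) *
            ∫ ω : ℝ, Complex.exp (Complex.I * ω * t) *
              (∑ k ∈ Finset.Icc 1 d, (a k : ℂ) * (Complex.I * ω) ^ (-(k : ℤ))) * X ω‖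
          ≤ ε := by
  have hπ : 0 < Real.pi := Real.pi_pos
  set c : ℝ := Ω⁻¹ with hc
  have hcpos : 0 < c := inv_pos.mpr hΩ
  obtain ⟨M, hM1, htail⟩ := tail_small X hX_int (Real.pi * ε / 2) (by positivity)
  have hMpos : 0 < M := by linarith
  set S : ℝ := 2 * M^2 / (Real.pi * ε) with hS
  have hSpos : 0 < S := by positivity
  set ρ : ℝ → ℝ := fun u => S * u^2 / (1 + S * u^2) with hρ
  have hden : ∀ u : ℝ, 0 < 1 + S * u^2 := fun u => by positivity
  have hρ_nonneg : ∀ u, 0 ≤ ρ u := fun u => div_nonneg (by positivity) (hden u).le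
  have hρ_le_one : ∀ u, ρ u ≤ 1 := fun u => by
    rw [hρ]
    rw [div_le_one (hden u)]
    linarith
  set F : ℝ → ℂ := fun u => Complex.exp (Complex.I * ((T/u : ℝ) : ℂ)) * ((ρ u : ℝ) : ℂ)
    with hF
  have hF0 : F 0 = 0 := by simp [hF, hρ]
  have hFnorm : ∀ u, ‖F u‖ = ρ u := by
    intro u
    rw [hF]
    simp only []
    rw [norm_mul, mul_comm Complex.I,
      Complex.norm_exp_ofReal_mul_I, one_mul, Complex.norm_real, Real.norm_eq_abs,
      _root_.abs_of_nonneg (hρ_nonneg u)]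
  have hherm : ∀ u : ℝ, F (-u) = (starRingEnd ℂ) (F u) := by
    intro u
    have h1 : ρ (-u) = ρ u := by simp [hρ]
    simp only [hF, h1]
    rw [map_mul, ← Complex.exp_conj, map_mul, Complex.conj_I, Complex.conj_ofReal,
      Complex.conj_ofReal]
    congr 2
    push_cast [div_neg]
    ring
  have hFcont : Continuous F := by
    rw [continuous_iff_continuousAt]
    intro u₀
    by_cases h : u₀ = 0
    · subst h
      have key : Filter.Tendsto F (nhds 0) (nhds 0) := by
        apply squeeze_zero_norm (a := fun u : ℝ => S * u^2)
        · intro u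
          rw [hFnorm u, hρ, div_le_iff₀ (hden u)]
          nlinarith [sq_nonneg u, sq_nonneg (S*u^2)]
        · have : Filter.Tendsto (fun u : ℝ => S * u^2) (nhds 0) (nhds (S * 0^2)) :=
            ((continuous_const.mul (continuous_pow 2)).tendsto 0)
          simpa using this
      rw [ContinuousAt, hF0]
      exact key
    · apply ContinuousAt.mul
      · apply Complex.continuous_exp.continuousAt.comp
        apply ContinuousAt.mul continuousAt_const
        apply Complex.continuous_ofReal.continuousAt.comp
        exact (continuousAt_const.div continuousAt_id h)
      · apply Complex.continuous_ofReal.continuousAt.comp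
        apply ContinuousAt.div
        · exact continuousAt_const.mul ((continuous_pow 2).continuousAt)
        · exact continuousAt_const.add (continuousAt_const.mul ((continuous_pow 2).continuousAt))
        · exact (hden u₀).ne'
  obtain ⟨d, hd1, a, happ⟩ := approx c (Real.pi*ε/2) hcpos (by positivity) F hF0 hherm
    hFcont.continuousOn
  refine ⟨d, hd1, a, fun t => ?_⟩
  set ψ : ℝ → ℂ := fun ω : ℝ =>
    ∑ k ∈ Finset.Icc 1 d, (a k : ℂ) * (Complex.I * ω) ^ (-(k : ℤ)) with hψ
  set E : ℝ → ℂ := fun ω : ℝ => Complex.exp (Complex.I * ω * T) with hE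
  have hEnorm : ∀ ω, ‖E ω‖ = 1 := by
    intro ω
    rw [hE]
    simp only []
    rw [Complex.norm_exp]
    norm_num [Complex.mul_re, Complex.mul_im]
  -- pointwise bound
  have hpt : ∀ ω : ℝ, ‖(E ω - ψ ω) * X ω‖ ≤ Real.pi * ε * ‖X ω‖
      + Set.indicator ((Icc (-M) M)ᶜ) (fun ω => ‖X ω‖) ω := by
    intro ω
    have hind0 : 0 ≤ Set.indicator ((Icc (-M) M)ᶜ) (fun ω => ‖X ω‖) ω :=
      Set.indicator_nonneg (fun _ _ => norm_nonneg _) ω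
    by_cases hX0 : X ω = 0
    · rw [hX0]
      simp only [mul_zero, norm_zero]
      positivity
    · have hωΩ : Ω ≤ |ω| := not_lt.mp (fun h => hX0 (hgap ω h))
      have hω0 : ω ≠ 0 := by
        intro h
        rw [h, abs_zero] at hωΩ
        linarith
      have habs : |ω⁻¹| ≤ c := by
        rw [abs_inv, hc]
        exact inv_anti₀ hΩ hωΩ
      have humem : ω⁻¹ ∈ Icc (-c) c := abs_le.mp habs
      have hψω : ψ ω = ∑ k ∈ Finset.Icc 1 d,
          (a k : ℂ) * (-(Complex.I * ((ω⁻¹ : ℝ) : ℂ)))^k := by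
        refine Finset.sum_congr rfl fun k hk => ?_
        congr 1
        rw [zpow_neg, zpow_natCast, ← inv_pow]
        congr 1
        apply inv_eq_of_mul_eq_one_right
        rw [Complex.ofReal_inv]
        have hωC : (ω : ℂ) ≠ 0 := Complex.ofReal_ne_zero.mpr hω0
        field_simp
        rw [Complex.I_sq]
        ring
      have hFω : F ω⁻¹ = E ω * ((ρ ω⁻¹ : ℝ) : ℂ) := by
        rw [hF, hE]
        simp only []
        congr 2
        rw [show T / ω⁻¹ = T * ω by field_simp]
        push_cast
        ring
      have happω := happ ω⁻¹ humem
      rw [← hψω] at happω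
      have h3 : ‖E ω - ψ ω‖ ≤ (1 - ρ ω⁻¹) + Real.pi * ε / 2 := by
        have hdecomp : E ω - ψ ω = E ω * (1 - ((ρ ω⁻¹ : ℝ):ℂ)) + (F ω⁻¹ - ψ ω) := by
          rw [hFω]
          ring
        rw [hdecomp]
        refine le_trans (norm_add_le _ _) ?_
        have e1 : ‖E ω * (1 - ((ρ ω⁻¹ : ℝ):ℂ))‖ = 1 - ρ ω⁻¹ := by
          rw [norm_mul, hEnorm, one_mul,
            show (1 - ((ρ ω⁻¹ : ℝ):ℂ)) = (((1 - ρ ω⁻¹ : ℝ)):ℂ) by push_cast; ring,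
            Complex.norm_real, Real.norm_eq_abs, _root_.abs_of_nonneg (by linarith [hρ_le_one ω⁻¹])]
        have e2 : ‖F ω⁻¹ - ψ ω‖ ≤ Real.pi * ε / 2 := by
          rw [norm_sub_rev]
          exact happω
        linarith
      rw [norm_mul]
      by_cases hM : |ω| ≤ M
      · have h1r : 1 - ρ ω⁻¹ ≤ Real.pi * ε / 2 := by
          have hω2 : ω^2 ≤ M^2 := by nlinarith [abs_nonneg ω, _root_.sq_abs ω]
          have hω2pos : 0 < ω^2 := by positivity
          have hval : 1 - ρ ω⁻¹ = ω^2 / (ω^2 + S) := by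
            rw [hρ]
            simp only []
            rw [inv_pow]
            field_simp
            ring
          rw [hval]
          have hMS : M^2 / S = Real.pi * ε / 2 := by
            rw [hS]
            field_simp
          rw [← hMS]
          rw [div_le_div_iff₀ (by positivity) hSpos]
          have ha : ω^2 * S ≤ M^2 * S := mul_le_mul_of_nonneg_right hω2 hSpos.le
          have hb : 0 ≤ M^2 * ω^2 := by positivity
          nlinarith [ha, hb]
        have h5 : ‖E ω - ψ ω‖ ≤ Real.pi * ε := by linarith
        have h6 := mul_le_mul_of_nonneg_right h5 (norm_nonneg (X ω))
        linarith
      · have hins : Set.indicator ((Icc (-M) M)ᶜ) (fun ω => ‖X ω‖) ω = ‖X ω‖ := by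
          rw [Set.indicator_of_mem]
          rw [mem_compl_iff, mem_Icc]
          intro hcon
          exact hM (abs_le.mpr hcon)
        rw [hins]
        have h4 : ‖E ω - ψ ω‖ ≤ Real.pi * ε + 1 := by
          have h7 := hρ_nonneg ω⁻¹
          have hpe : 0 < Real.pi * ε := by positivity
          linarith
        have h6 := mul_le_mul_of_nonneg_right h4 (norm_nonneg (X ω))
        linarith
  -- integrability facts
  have hcexp : ∀ ω : ℝ, ‖Complex.exp (Complex.I * ω * t)‖ = 1 := by
    intro ω
    rw [Complex.norm_exp]
    norm_num [Complex.mul_re, Complex.mul_im]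
  have hψmeas : Measurable ψ := by
    rw [hψ]
    apply Finset.measurable_sum
    intro k _
    apply Measurable.const_mul
    have hrw : (fun ω : ℝ => (Complex.I * (ω:ℂ)) ^ (-(k:ℤ)))
        = fun ω : ℝ => ((Complex.I * (ω:ℂ))^k)⁻¹ := by
      funext ω
      rw [zpow_neg, zpow_natCast]
    rw [hrw]
    exact ((continuous_const.mul Complex.continuous_ofReal).pow k).measurable.inv
  set Cψ : ℝ := ∑ k ∈ Finset.Icc 1 d, |a k| * c^k with hCψ
  have hψbound : ∀ ω : ℝ, X ω ≠ 0 → ‖ψ ω‖ ≤ Cψ := by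
    intro ω hX0
    have hωΩ : Ω ≤ |ω| := not_lt.mp (fun h => hX0 (hgap ω h))
    have hω0 : ω ≠ 0 := by
      intro h
      rw [h, abs_zero] at hωΩ
      linarith
    have habs : |ω|⁻¹ ≤ c := by
      rw [hc]
      exact inv_anti₀ hΩ hωΩ
    rw [hψ, hCψ]
    refine le_trans (norm_sum_le _ _) (Finset.sum_le_sum fun k _ => ?_)
    rw [norm_mul, Complex.norm_real, Real.norm_eq_abs]
    refine mul_le_mul_of_nonneg_left ?_ (abs_nonneg _)
    rw [norm_zpow, norm_mul, Complex.norm_I, one_mul,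
      Complex.norm_real, Real.norm_eq_abs, zpow_neg, zpow_natCast, ← inv_pow]
    exact pow_le_pow_left₀ (inv_nonneg.mpr (abs_nonneg _)) habs k
  have hEXint : Integrable (fun ω : ℝ => Complex.exp (Complex.I * ω * t) * (E ω * X ω)) := by
    apply Integrable.mono' hX_int.norm
    · refine AEStronglyMeasurable.mul ?_ (AEStronglyMeasurable.mul ?_ hX_int.1)
      · exact (Complex.continuous_exp.comp
          ((continuous_const.mul Complex.continuous_ofReal).mul continuous_const)).aestronglyMeasurable
      · rw [hE]
        exact (Complex.continuous_exp.comp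
          ((continuous_const.mul Complex.continuous_ofReal).mul continuous_const)).aestronglyMeasurable
    · filter_upwards with ω
      rw [norm_mul, norm_mul, hcexp, hEnorm, one_mul, one_mul]
  have hψXint : Integrable (fun ω : ℝ => Complex.exp (Complex.I * ω * t) * ψ ω * X ω) := by
    apply Integrable.mono' (hX_int.norm.const_mul Cψ)
    · refine AEStronglyMeasurable.mul (AEStronglyMeasurable.mul ?_
        hψmeas.aestronglyMeasurable) hX_int.1
      exact (Complex.continuous_exp.comp
        ((continuous_const.mul Complex.continuous_ofReal).mul continuous_const)).aestronglyMeasurable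
    · filter_upwards with ω
      rw [norm_mul, norm_mul, hcexp, one_mul]
      by_cases hX0 : X ω = 0
      · simp [hX0]
      · exact mul_le_mul_of_nonneg_right (hψbound ω hX0) (norm_nonneg _)
  -- assembly
  rw [hinv (t+T)]
  have hcongr : (∫ ω : ℝ, Complex.exp (Complex.I * ω * ((t + T : ℝ):ℂ)) * X ω)
      = ∫ ω : ℝ, Complex.exp (Complex.I * ω * t) * (E ω * X ω) := by
    refine integral_congr_ae (Filter.Eventually.of_forall fun ω => ?_)
    rw [hE]
    simp only []
    rw [show (Complex.I * (ω:ℂ) * ((t + T : ℝ):ℂ)) = Complex.I * ω * t + Complex.I * ω * T by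
      push_cast; ring, Complex.exp_add]
    ring
  rw [hcongr]
  have hgoal : (fun ω : ℝ => Complex.exp (Complex.I * ω * t) *
        (∑ k ∈ Finset.Icc 1 d, (a k : ℂ) * (Complex.I * ω) ^ (-(k : ℤ))) * X ω)
      = fun ω : ℝ => Complex.exp (Complex.I * ω * t) * ψ ω * X ω := by
    funext ω
    rw [hψ]
  rw [hgoal]
  have hsplit2 : (1 / (2 * (Real.pi:ℂ))) * (∫ ω : ℝ, Complex.exp (Complex.I * ω * t) * (E ω * X ω))
        - (1 / (2 * (Real.pi:ℂ))) * ∫ ω : ℝ, Complex.exp (Complex.I * ω * t) * ψ ω * X ω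
      = (1 / (2 * (Real.pi:ℂ))) * ∫ ω : ℝ,
          Complex.exp (Complex.I * ω * t) * ((E ω - ψ ω) * X ω) := by
    rw [← mul_sub, ← integral_sub hEXint hψXint]
    congr 1
    refine integral_congr_ae (Filter.Eventually.of_forall fun ω => ?_)
    simp only [Pi.sub_apply]
    ring
  rw [hsplit2]
  rw [norm_mul]
  have hsc : ‖(1 / (2 * (Real.pi:ℂ)))‖ = 1 / (2 * Real.pi) := by
    rw [show (1 / (2 * (Real.pi:ℂ))) = (((1 / (2 * Real.pi) : ℝ)):ℂ) by push_cast; ring,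
      Complex.norm_real, Real.norm_eq_abs, _root_.abs_of_nonneg (by positivity)]
  rw [hsc]
  have hhint : Integrable (fun ω : ℝ =>
      Complex.exp (Complex.I * ω * t) * ((E ω - ψ ω) * X ω)) := by
    refine (hEXint.sub hψXint).congr (Filter.Eventually.of_forall fun ω => ?_)
    simp only [Pi.sub_apply]
    ring
  have hnorm1 : ‖∫ ω : ℝ, Complex.exp (Complex.I * ω * t) * ((E ω - ψ ω) * X ω)‖
      ≤ ∫ ω : ℝ, ‖Complex.exp (Complex.I * ω * t) * ((E ω - ψ ω) * X ω)‖ :=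
    norm_integral_le_integral_norm _
  have hRHSint : Integrable (fun ω : ℝ => Real.pi * ε * ‖X ω‖
      + Set.indicator ((Icc (-M) M)ᶜ) (fun ω => ‖X ω‖) ω) := by
    refine (hX_int.norm.const_mul _).add ?_
    exact hX_int.norm.indicator measurableSet_Icc.compl
  have hnorm2 : (∫ ω : ℝ, ‖Complex.exp (Complex.I * ω * t) * ((E ω - ψ ω) * X ω)‖)
      ≤ ∫ ω : ℝ, (Real.pi * ε * ‖X ω‖
        + Set.indicator ((Icc (-M) M)ᶜ) (fun ω => ‖X ω‖) ω) := by
    refine integral_mono hhint.norm hRHSint fun ω => ?_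
    rw [norm_mul, hcexp, one_mul]
    exact hpt ω
  have hval : (∫ ω : ℝ, (Real.pi * ε * ‖X ω‖
        + Set.indicator ((Icc (-M) M)ᶜ) (fun ω => ‖X ω‖) ω))
      ≤ Real.pi * ε + Real.pi * ε / 2 := by
    rw [integral_add (hX_int.norm.const_mul _)
      (hX_int.norm.indicator measurableSet_Icc.compl),
      integral_const_mul, integral_indicator measurableSet_Icc.compl]
    have h1 : Real.pi * ε * ∫ ω : ℝ, ‖X ω‖ ≤ Real.pi * ε := by
      have := mul_le_mul_of_nonneg_left hX_norm (le_of_lt (show (0:ℝ) < Real.pi * ε by positivity))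
      linarith
    linarith [htail]
  have hfinal : (1 / (2 * Real.pi)) * (Real.pi * ε + Real.pi * ε / 2) = 3 * ε / 4 := by
    have h2π : (2 * Real.pi) ≠ 0 := by positivity
    rw [div_mul_eq_mul_div, one_mul, div_eq_div_iff h2π (by norm_num : (4:ℝ) ≠ 0)]
    ring
  have hpos : 0 ≤ 1 / (2 * Real.pi) := by positivity
  calc (1 / (2 * Real.pi)) * ‖∫ ω : ℝ, Complex.exp (Complex.I * ω * t) * ((E ω - ψ ω) * X ω)‖
      ≤ (1 / (2 * Real.pi)) * (Real.pi * ε + Real.pi * ε / 2) :=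
        mul_le_mul_of_nonneg_left (le_trans hnorm1 (le_trans hnorm2 hval)) hpos
    _ = 3 * ε / 4 := hfinal
    _ ≤ ε := by linarith
end

section
/- Let g : {ω ∈ ℝ : |ω| ≥ Ω} → ℝ be continuous, vanishing at infinity, and odd (g(−ω) = −g(ω)). Then for every ε > 0 there exist d and real coefficients b₀,…,b_d such that sup_{|ω| ≥ Ω} |g(ω) − Σ_{m=0}^{d} b_m ω^{−(2m+1)}| ≤ ε. -/
open Filter Set Topology

lemma oddpart_sum (c : ℕ → ℝ) (x : ℝ) :
    ∀ k : ℕ, ((∑ n ∈ Finset.range (2*k), c n * x^n)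
        - ∑ n ∈ Finset.range (2*k), c n * (-x)^n)/2
      = ∑ m ∈ Finset.range k, c (2*m+1) * x^(2*m+1) := by
  intro k
  induction k with
  | zero => simp
  | succ k ih =>
    rw [show 2*(k+1) = 2*k+1+1 from by ring, Finset.sum_range_succ, Finset.sum_range_succ,
      Finset.sum_range_succ (fun n => c n * (-x)^n), Finset.sum_range_succ (fun n => c n * (-x)^n),
      Finset.sum_range_succ]
    have he : (-x)^(2*k) = x^(2*k) := (even_two_mul k).neg_pow x
    have ho : (-x)^(2*k+1) = -x^(2*k+1) := (odd_two_mul_add_one k).neg_pow x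
    rw [he, ho, ← ih]
    ring

lemma oddpart_eval (p : Polynomial ℝ) (x : ℝ) (k : ℕ) (hk : p.natDegree < 2*k) :
    (Polynomial.eval x p - Polynomial.eval (-x) p)/2
      = ∑ m ∈ Finset.range k, p.coeff (2*m+1) * x^(2*m+1) := by
  rw [Polynomial.eval_eq_sum_range' hk, Polynomial.eval_eq_sum_range' hk]
  exact oddpart_sum p.coeff x k

theorem stmt15
    (Ω : ℝ) (hΩ : 0 < Ω)
    (g : ℝ → ℝ)
    (hg_cont : ContinuousOn g {ω : ℝ | Ω ≤ |ω|})
    (hg_lim : Tendsto g (cocompact ℝ) (nhds 0))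
    (hg_odd : ∀ ω : ℝ, g (-ω) = -g ω)
    (ε : ℝ) (hε : 0 < ε) :
    ∃ (d : ℕ) (b : ℕ → ℝ),
      ∀ ω : ℝ, Ω ≤ |ω| →
        |g ω - ∑ m ∈ Finset.range (d + 1), b m * ω ^ (-(2 * m + 1 : ℤ))| ≤ ε := by
  set h : ℝ → ℝ := fun x => if x = 0 then 0 else g x⁻¹ with hh
  have hmem : ∀ x : ℝ, x ∈ Icc (-Ω⁻¹) Ω⁻¹ → x ≠ 0 → x⁻¹ ∈ {ω : ℝ | Ω ≤ |ω|} := by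
    intro x hx hx0
    have h1 : |x| ≤ Ω⁻¹ := abs_le.2 ⟨hx.1, hx.2⟩
    have h2 : (0:ℝ) < |x| := abs_pos.2 hx0
    simp only [mem_setOf_eq, abs_inv]
    rw [le_inv_comm₀ hΩ h2]
    exact h1
  -- continuity of h on the compact interval
  have hcont : ContinuousOn h (Icc (-Ω⁻¹) Ω⁻¹) := by
    intro x hx
    rcases eq_or_ne x 0 with rfl | hx0
    · -- continuity at 0
      have h0 : h 0 = 0 := by simp [hh]
      have htendinv : Tendsto (fun y : ℝ => y⁻¹) (𝓝[≠] (0:ℝ)) (cocompact ℝ) := by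
        rw [← Metric.cobounded_eq_cocompact]
        exact tendsto_inv₀_nhdsNE_zero
      have ht : Tendsto h (𝓝[≠] (0:ℝ)) (𝓝 0) := by
        refine (hg_lim.comp htendinv).congr' ?_
        filter_upwards [self_mem_nhdsWithin] with y hy
        have hy' : y ≠ 0 := hy
        simp only [hh, if_neg hy', Function.comp]
      have hca : ContinuousAt h 0 := by
        rw [← continuousWithinAt_compl_self]
        rw [ContinuousWithinAt, h0]
        exact ht
      exact hca.continuousWithinAt
    · -- continuity at x ≠ 0
      have hgw : ContinuousWithinAt (fun y : ℝ => g y⁻¹) (Icc (-Ω⁻¹) Ω⁻¹ ∩ {y | y ≠ 0}) x := by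
        refine ContinuousWithinAt.comp (hg_cont _ (hmem x hx hx0)) ?_ ?_
        · exact (continuousAt_inv₀ hx0).continuousWithinAt
        · intro y hy
          exact hmem y hy.1 hy.2
      have hcw : ContinuousWithinAt h (Icc (-Ω⁻¹) Ω⁻¹ ∩ {y | y ≠ 0}) x := by
        refine hgw.congr ?_ ?_
        · intro y hy
          show (if y = 0 then 0 else g y⁻¹) = g y⁻¹
          rw [if_neg hy.2]
        · show (if x = 0 then 0 else g x⁻¹) = g x⁻¹
          rw [if_neg hx0]
      have hopen : {y : ℝ | y ≠ 0} ∈ 𝓝 x := isOpen_ne.mem_nhds hx0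
      exact (continuousWithinAt_inter hopen).mp hcw
  -- h is odd
  have hodd : ∀ x : ℝ, h (-x) = -h x := by
    intro x
    rcases eq_or_ne x 0 with rfl | hx0
    · simp [hh]
    · have : -x ≠ 0 := neg_ne_zero.2 hx0
      simp only [hh, if_neg hx0, if_neg this, inv_neg]
      exact hg_odd _
  -- Weierstrass
  obtain ⟨p, hp⟩ := exists_polynomial_near_of_continuousOn (-Ω⁻¹) Ω⁻¹ h hcont ε hε
  refine ⟨p.natDegree, fun m => p.coeff (2*m+1), ?_⟩
  intro ω hω
  have hω0 : ω ≠ 0 := by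
    intro h'; rw [h'] at hω; simp at hω; linarith
  set x : ℝ := ω⁻¹ with hxdef
  have hxmem : x ∈ Icc (-Ω⁻¹) Ω⁻¹ := by
    have h1 : |x| ≤ Ω⁻¹ := by
      rw [hxdef, abs_inv]
      exact inv_anti₀ hΩ hω
    exact abs_le.1 h1
  have hxmem' : -x ∈ Icc (-Ω⁻¹) Ω⁻¹ := by
    have h1 : |(-x)| ≤ Ω⁻¹ := by rw [abs_neg]; exact abs_le.2 ⟨hxmem.1, hxmem.2⟩
    exact abs_le.1 h1
  have hx0 : x ≠ 0 := inv_ne_zero hω0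
  have hhx : h x = g ω := by simp [hh, if_neg hx0, hxdef, inv_inv, hω0]
  -- rewrite the sum
  have hsum : ∑ m ∈ Finset.range (p.natDegree + 1), p.coeff (2*m+1) * ω ^ (-(2 * (m:ℤ) + 1))
      = (Polynomial.eval x p - Polynomial.eval (-x) p)/2 := by
    rw [oddpart_eval p x (p.natDegree + 1) (by omega)]
    refine Finset.sum_congr rfl fun m _ => ?_
    congr 1
    have : (-(2 * (m:ℤ) + 1)) = -((2*m+1 : ℕ) : ℤ) := by push_cast; ring
    rw [this, zpow_neg, zpow_natCast, ← inv_pow, ← hxdef]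
  rw [hsum]
  have h1 := hp x hxmem
  have h2 := hp (-x) hxmem'
  have hhx' : h (-x) = -g ω := by rw [hodd, hhx]
  rw [hhx] at h1
  rw [hhx'] at h2
  have key : g ω - (Polynomial.eval x p - Polynomial.eval (-x) p)/2
      = ((g ω - Polynomial.eval x p) + (Polynomial.eval (-x) p - (-g ω)))/2 := by ring
  rw [key, abs_div, abs_two]
  have h3 := abs_add_le (g ω - Polynomial.eval x p) (Polynomial.eval (-x) p - (-g ω))
  have h1' : |g ω - Polynomial.eval x p| < ε := by rw [abs_sub_comm]; exact h1
  linarith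
end
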